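/- A finite lattice L is meet-distributive with width(M(L)) ≤ 2 if and only if L is lower semimodular and dually slim (i.e., width(M(L)) ≤ 2, where M(L) is the set of meet-irreducible elements). -/

import Mathlib

/-- A finite lattice is meet-distributive if for every `u ≠ ⊥` the interval
`[u_*, u]` is distributive, where `u_*` is the meet of the lower covers of `u`. -/
def MeetDistributive (L : Type*) [Lattice L] [OrderBot L] : Prop :=
  ∀ u : L, u ≠ ⊥ → ∀ s : L, IsGLB {a : L | a ⋖ u} s →
    ∀ x ∈ Set.Icc s u, ∀ y ∈ Set.Icc s u, ∀ z ∈ Set.Icc s u,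
      x ⊓ (y ⊔ z) = (x ⊓ y) ⊔ (x ⊓ z)

/-- Lower semimodularity: `a ⋖ a ⊔ b` implies `a ⊓ b ⋖ b`. -/
def LowerSemimodular (L : Type*) [Lattice L] : Prop :=
  ∀ a b : L, a ⋖ a ⊔ b → a ⊓ b ⋖ b

/-- The set `M(L)` of meet-irreducible elements has width at most 2. -/
def DuallySlim (L : Type*) [Lattice L] : Prop :=
  ∀ A : Finset L, (∀ a ∈ A, InfIrred a) → IsAntichain (· ≤ ·) (↑A : Set L) →
    A.card ≤ 2

section Aux

variable {L : Type*} [Lattice L] [Fintype L]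

lemma aux_exists_covBy_le {z u : L} (h : z < u) : ∃ c, z ≤ c ∧ c ⋖ u := by
  classical
  let T : Finset L := Finset.univ.filter (fun c => z ≤ c ∧ c < u)
  have hzT : z ∈ T := by simp [T, h]
  obtain ⟨c, hcT, hmax⟩ := T.exists_maximal ⟨z, hzT⟩
  simp only [T, Finset.mem_filter, Finset.mem_univ, true_and] at hcT
  refine ⟨c, hcT.1, hcT.2, ?_⟩
  intro d hcd hdu
  exact hcd.not_ge (hmax (by simp [T, hcT.1.trans hcd.le, hdu]) hcd.le)

lemma aux_infIrred_of_max {u m : L} (hum : ¬ u ≤ m)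
    (hmax : ∀ x, ¬ u ≤ x → m ≤ x → x = m) : InfIrred m := by
  constructor
  · intro hmaxm
    have h1 : m < m ⊔ u := left_lt_sup.2 hum
    exact absurd (hmaxm h1.le) (not_le_of_gt h1)
  · intro b c hbc
    by_contra hne
    push_neg at hne
    have hmb : m ≤ b := hbc ▸ inf_le_left
    have hmc : m ≤ c := hbc ▸ inf_le_right
    have hub : u ≤ b := by
      by_contra h; exact hne.1 (hmax b h hmb)
    have huc : u ≤ c := by
      by_contra h; exact hne.2 (hmax c h hmc)
    exact hum (hbc ▸ le_inf hub huc)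

lemma aux_exists_infIrred_above {u a : L} (hua : ¬ u ≤ a) :
    ∃ m, a ≤ m ∧ ¬ u ≤ m ∧ InfIrred m := by
  classical
  let T : Finset L := Finset.univ.filter (fun x => a ≤ x ∧ ¬ u ≤ x)
  obtain ⟨m, hmT, hmax⟩ := T.exists_maximal ⟨a, by simp [T, hua]⟩
  simp only [T, Finset.mem_filter, Finset.mem_univ, true_and] at hmT
  refine ⟨m, hmT.1, hmT.2, aux_infIrred_of_max hmT.2 ?_⟩
  intro x hux hmx
  by_contra hne
  exact (lt_of_le_of_ne hmx (Ne.symm hne)).not_ge (hmax (by simp [T, hmT.1.trans hmx, hux]) hmx)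

lemma aux_covBy_sup_eq {a b u : L} (ha : a ⋖ u) (hb : b ⋖ u) (hne : a ≠ b) :
    a ⊔ b = u := by
  have hle : a ⊔ b ≤ u := sup_le ha.le hb.le
  rcases eq_or_lt_of_le (le_sup_left : a ≤ a ⊔ b) with h | h
  · exfalso
    have hba : b ≤ a := le_sup_right.trans h.symm.le
    rcases eq_or_lt_of_le hba with h2 | h2
    · exact hne h2.symm
    · exact hb.2 h2 ha.1
  · rcases eq_or_lt_of_le hle with h2 | h2
    · exact h2
    · exact absurd h2 (ha.2 h)

/-- Under dual slimness, no element has three distinct lower covers. -/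
lemma aux_no_three_covers (hDS : DuallySlim L) {u a b c : L}
    (ha : a ⋖ u) (hb : b ⋖ u) (hc : c ⋖ u)
    (hab : a ≠ b) (hac : a ≠ c) (hbc : b ≠ c) : False := by
  classical
  obtain ⟨ma, hama, huma, hia⟩ := aux_exists_infIrred_above ha.lt.not_ge
  obtain ⟨mb, hbmb, humb, hib⟩ := aux_exists_infIrred_above hb.lt.not_ge
  obtain ⟨mc, hcmc, humc, hic⟩ := aux_exists_infIrred_above hc.lt.not_ge
  have key : ∀ {x y mx my : L}, x ⋖ u → y ⋖ u → x ≠ y → x ≤ mx → y ≤ my →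
      ¬ u ≤ my → mx ≤ my → False := by
    intro x y mx my hx hy hxy hxmx hymy humy hle
    exact humy ((aux_covBy_sup_eq hx hy hxy) ▸ sup_le (hxmx.trans hle) hymy)
  have h12 : ¬ ma ≤ mb := fun h => key ha hb hab hama hbmb humb h
  have h21 : ¬ mb ≤ ma := fun h => key hb ha hab.symm hbmb hama huma h
  have h13 : ¬ ma ≤ mc := fun h => key ha hc hac hama hcmc humc h
  have h31 : ¬ mc ≤ ma := fun h => key hc ha hac.symm hcmc hama huma h
  have h23 : ¬ mb ≤ mc := fun h => key hb hc hbc hbmb hcmc humc h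
  have h32 : ¬ mc ≤ mb := fun h => key hc hb hbc.symm hcmc hbmb humb h
  have hne12 : ma ≠ mb := fun h => h12 h.le
  have hne13 : ma ≠ mc := fun h => h13 h.le
  have hne23 : mb ≠ mc := fun h => h23 h.le
  set A : Finset L := {ma, mb, mc} with hA
  have hcard : A.card = 3 := by
    rw [hA, Finset.card_insert_of_notMem (by simp [hne12, hne13]),
      Finset.card_insert_of_notMem (by simp [hne23]), Finset.card_singleton]
  have hirr : ∀ x ∈ A, InfIrred x := by
    intro x hx
    simp only [hA, Finset.mem_insert, Finset.mem_singleton] at hx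
    rcases hx with rfl | rfl | rfl <;> assumption
  have hanti : IsAntichain (· ≤ ·) (↑A : Set L) := by
    intro x hx y hy hxy hle
    simp only [hA, Finset.coe_insert, Set.mem_insert_iff, Finset.coe_singleton,
      Set.mem_singleton_iff] at hx hy
    rcases hx with rfl | rfl | rfl <;> rcases hy with rfl | rfl | rfl <;>
      first
        | exact hxy rfl
        | exact h12 hle | exact h21 hle | exact h13 hle
        | exact h31 hle | exact h23 hle | exact h32 hle
  have := hDS A hirr hanti
  omega

/-- Distributivity in a `{a ⊓ b, a, b, a ⊔ b}` configuration (in any lattice). -/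
lemma aux_diamond {a b : L} {x y z : L}
    (hx : x = a ⊓ b ∨ x = a ∨ x = b ∨ x = a ⊔ b)
    (hy : y = a ⊓ b ∨ y = a ∨ y = b ∨ y = a ⊔ b)
    (hz : z = a ⊓ b ∨ z = a ∨ z = b ∨ z = a ⊔ b) :
    x ⊓ (y ⊔ z) = (x ⊓ y) ⊔ (x ⊓ z) := by
  have hle : ∀ {p q r : L}, p ⊓ (q ⊔ r) ≤ (p ⊓ q) ⊔ (p ⊓ r) → p ⊓ (q ⊔ r) = (p ⊓ q) ⊔ (p ⊓ r) :=
    fun h => le_antisymm h le_inf_sup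
  rcases hx with rfl | rfl | rfl | rfl <;> rcases hy with rfl | rfl | rfl | rfl <;>
    rcases hz with rfl | rfl | rfl | rfl <;>
    apply hle <;>
    simp [inf_sup_self, sup_inf_self, inf_assoc, sup_assoc,
      inf_le_left, inf_le_right, le_sup_left, le_sup_right]

end Aux

/-- A finite lattice `L` is meet-distributive with `width(M(L)) ≤ 2`
if and only if `L` is lower semimodular and dually slim. -/
theorem stmt9 {L : Type*} [Lattice L] [Fintype L] [OrderBot L] :
    (MeetDistributive L ∧ DuallySlim L) ↔ (LowerSemimodular L ∧ DuallySlim L) := by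
  classical
  constructor
  · rintro ⟨hMD, hDS⟩
    refine ⟨?_, hDS⟩
    -- meet-distributive implies lower semimodular
    have key : ∀ u : L, ∀ a b : L, a ⋖ u → a ⊔ b = u → a ⊓ b ⋖ b := by
      intro u
      induction u using WellFoundedLT.induction with
      | _ u ih =>
        intro a b hau hab
        rcases eq_or_lt_of_le (le_sup_right.trans hab.le : b ≤ u) with hbu | hbu
        · subst hbu
          rwa [inf_eq_left.2 hau.le]
        · obtain ⟨e, hbe, heu⟩ := aux_exists_covBy_le hbu
          have hea : e ≠ a := by
            rintro rfl
            exact hau.lt.ne' (hab.symm.trans (sup_eq_left.2 hbe))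
          have hnea : ¬ e ≤ a := by
            intro h
            rcases eq_or_lt_of_le h with h2 | h2
            · exact hea h2
            · exact heu.2 h2 hau.lt
          have hune : u ≠ ⊥ := fun h => not_lt_bot (h ▸ hau.lt)
          set T : Finset L := Finset.univ.filter (fun c => c ⋖ u) with hT
          have haT : a ∈ T := by simp [hT, hau]
          have hTne : T.Nonempty := ⟨a, haT⟩
          set s : L := T.inf' hTne id with hsdef
          have hglb : IsGLB {c : L | c ⋖ u} s := by
            constructor
            · intro c hc
              exact Finset.inf'_le id (by simp [hT]; exact hc)
            · intro w hw
              exact Finset.le_inf' hTne id fun c hc => hw (by simpa [hT] using hc)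
          have hsa : s ≤ a := hglb.1 hau
          have hse : s ≤ e := hglb.1 heu
          have hdist := hMD u hune s hglb
          -- a ⊓ e ⋖ e
          have hcov : a ⊓ e ⋖ e := by
            constructor
            · exact inf_lt_right.2 hnea
            · intro w hw hwe
              have hwmem : w ∈ Set.Icc s u :=
                ⟨(le_inf hsa hse).trans hw.le, hwe.le.trans heu.le⟩
              have heq : e ⊓ (a ⊔ w) = (e ⊓ a) ⊔ (e ⊓ w) :=
                hdist e ⟨hse, heu.le⟩ a ⟨hsa, hau.le⟩ w hwmem
              rcases eq_or_lt_of_le (le_sup_left : a ≤ a ⊔ w) with h2 | h2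
              · have : w ≤ a := le_sup_right.trans h2.symm.le
                exact absurd (le_inf this hwe.le) hw.not_ge
              · have h3 : a ⊔ w = u := by
                  have hle : a ⊔ w ≤ u := sup_le hau.le hwmem.2
                  rcases eq_or_lt_of_le hle with h4 | h4
                  · exact h4
                  · exact absurd h4 (hau.2 h2)
                rw [h3, inf_eq_left.2 heu.le, inf_eq_right.2 hwe.le, inf_comm e a,
                  sup_eq_right.2 hw.le] at heq
                exact hwe.ne heq.symm
          have habe : (a ⊓ e) ⊔ b = e := by
            have hle : (a ⊓ e) ⊔ b ≤ e := sup_le inf_le_right hbe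
            rcases eq_or_lt_of_le (le_sup_left : a ⊓ e ≤ (a ⊓ e) ⊔ b) with h2 | h2
            · exfalso
              have hba : b ≤ a := (le_sup_right.trans h2.symm.le).trans inf_le_left
              exact hau.lt.ne' (hab.symm.trans (sup_eq_left.2 hba))
            · rcases eq_or_lt_of_le hle with h4 | h4
              · exact h4
              · exact absurd h4 (hcov.2 h2)
          have hstep := ih e heu.lt (a ⊓ e) b hcov habe
          rwa [inf_assoc, inf_eq_right.2 hbe] at hstep
    intro a b h
    exact key (a ⊔ b) a b h rfl
  · rintro ⟨hLS, hDS⟩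
    refine ⟨?_, hDS⟩
    intro u hu s hglb x hx y hy z hz
    have hbot : (⊥ : L) < u := bot_lt_iff_ne_bot.2 hu
    obtain ⟨c0, -, hc0⟩ := aux_exists_covBy_le hbot
    set T : Finset L := Finset.univ.filter (fun c => c ⋖ u) with hT
    have hc0T : c0 ∈ T := by simp [hT, hc0]
    have hcard : T.card ≤ 2 := by
      by_contra h
      push_neg at h
      obtain ⟨a, b, c, haT, hbT, hcT, hab, hac, hbc⟩ := Finset.two_lt_card_iff.1 h
      simp only [hT, Finset.mem_filter, Finset.mem_univ, true_and] at haT hbT hcT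
      exact aux_no_three_covers hDS haT hbT hcT hab hac hbc
    have h1 : 1 ≤ T.card := Finset.card_pos.2 ⟨c0, hc0T⟩
    have h12 : T.card = 1 ∨ T.card = 2 := by omega
    rcases h12 with h | h
    · -- one lower cover
      obtain ⟨a, hTa⟩ := Finset.card_eq_one.1 h
      have hau : a ⋖ u := by
        have : a ∈ T := hTa ▸ Finset.mem_singleton_self a
        simpa [hT] using this
      have hset : {c : L | c ⋖ u} = {a} := by
        ext c
        simp only [Set.mem_setOf_eq, Set.mem_singleton_iff]
        constructor
        · intro hc
          have : c ∈ T := by simp [hT]; exact hc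
          rw [hTa] at this
          simpa using this
        · rintro rfl; exact hau
      have hsa : s = a := by
        rw [hset] at hglb
        exact hglb.unique isGLB_singleton
      have hmem : ∀ w ∈ Set.Icc s u, w = a ∨ w = u := by
        intro w hw
        rcases eq_or_lt_of_le hw.2 with h2 | h2
        · exact Or.inr h2
        · obtain ⟨c, hwc, hcu⟩ := aux_exists_covBy_le h2
          have hc' : c ∈ {c : L | c ⋖ u} := hcu
          rw [hset] at hc'
          rw [Set.mem_singleton_iff] at hc'
          subst hc'
          exact Or.inl (le_antisymm hwc (hsa ▸ hw.1))
      have conv : ∀ w, w = a ∨ w = u → w = a ⊓ u ∨ w = a ∨ w = u ∨ w = a ⊔ u :=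
        fun w h => h.elim (fun h => Or.inr (Or.inl h)) (fun h => Or.inr (Or.inr (Or.inl h)))
      exact aux_diamond (conv x (hmem x hx)) (conv y (hmem y hy)) (conv z (hmem z hz))
    · -- two lower covers
      obtain ⟨a, b, hab, hTab⟩ := Finset.card_eq_two.1 h
      have hau : a ⋖ u := by
        have : a ∈ T := hTab ▸ Finset.mem_insert_self a {b}
        simpa [hT] using this
      have hbu : b ⋖ u := by
        have : b ∈ T := hTab ▸ Finset.mem_insert_of_mem (Finset.mem_singleton_self b)
        simpa [hT] using this
      have habu : a ⊔ b = u := aux_covBy_sup_eq hau hbu hab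
      have hset : {c : L | c ⋖ u} = {a, b} := by
        ext c
        simp only [Set.mem_setOf_eq, Set.mem_insert_iff, Set.mem_singleton_iff]
        constructor
        · intro hc
          have : c ∈ T := by simp [hT]; exact hc
          rw [hTab] at this
          simpa using this
        · rintro (rfl | rfl) <;> assumption
      have hsab : s = a ⊓ b := by
        rw [hset] at hglb
        exact hglb.unique isGLB_pair
      have hcovb : a ⊓ b ⋖ b := hLS a b (by rwa [habu])
      have hcova : a ⊓ b ⋖ a := by
        have h' : b ⊔ a = u := by rwa [sup_comm b a]
        have := hLS b a (by rwa [h'])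
        rwa [inf_comm b a] at this
      have hmem : ∀ w ∈ Set.Icc s u, w = a ⊓ b ∨ w = a ∨ w = b ∨ w = a ⊔ b := by
        intro w hw
        rcases eq_or_lt_of_le hw.2 with h2 | h2
        · right; right; right; rw [habu]; exact h2
        · obtain ⟨c, hwc, hcu⟩ := aux_exists_covBy_le h2
          have hc' : c ∈ {c : L | c ⋖ u} := hcu
          rw [hset] at hc'
          have hsw : a ⊓ b ≤ w := hsab ▸ hw.1
          simp only [Set.mem_insert_iff, Set.mem_singleton_iff] at hc'
          rcases hc' with rfl | rfl
          · rcases eq_or_lt_of_le hsw with h3 | h3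
            · exact Or.inl h3.symm
            · right; left
              rcases eq_or_lt_of_le hwc with h4 | h4
              · exact h4
              · exact absurd h4 (hcova.2 h3)
          · rcases eq_or_lt_of_le hsw with h3 | h3
            · exact Or.inl h3.symm
            · right; right; left
              rcases eq_or_lt_of_le hwc with h4 | h4
              · exact h4
              · exact absurd h4 (hcovb.2 h3)
      exact aux_diamond (hmem x hx) (hmem y hy) (hmem z hz)
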